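/- (Lemma on odd-intersection mass.) Let 1 ≤ d ≤ k-1 and 1 ≤ s ≤ k-1. Define β = ⌈max{(k-d+1)/(2d+1), (d+1)/(2(k-d)+1)}⌉ and α = max{(k-d+1)/d, (d+1)/(k-d)}. Then Σ_{i odd, i ≤ d} C(s,i)C(k-s,d-i) ≥ (2s/(5α))·C(k,d) when s < β; ≥ (1/5)·C(k,d) when β ≤ s ≤ k-β; and ≥ (2(k-s)/(5α))·C(k,d) when s > k-β. -/

import Mathlib

open Finset

private lemma oilb_key_ineq (p q u v : ℝ) (hp : 1 ≤ p) (hq : 1 ≤ q) (hu : 1 ≤ u) (hv : 1 ≤ v) :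
    1/2 ≤ p*v/((u+1)*(q+1)) + u*q/((p+1)*(v+1)) := by
  have hx : (0:ℝ) < (u+1)*(q+1) := by nlinarith
  have hy : (0:ℝ) < (p+1)*(v+1) := by nlinarith
  rw [div_add_div _ _ (ne_of_gt hx) (ne_of_gt hy), le_div_iff₀ (by positivity)]
  have hpv : (p+1)*(v+1) ≤ 4*(p*v) := by nlinarith
  have huq : (u+1)*(q+1) ≤ 4*(u*q) := by nlinarith
  have h1 : ((p+1)*(v+1))^2 ≤ 4*(p*v*((p+1)*(v+1))) := by
    nlinarith [mul_le_mul_of_nonneg_right hpv hy.le]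
  have h2 : ((u+1)*(q+1))^2 ≤ 4*(u*q*((u+1)*(q+1))) := by
    nlinarith [mul_le_mul_of_nonneg_right huq hx.le]
  nlinarith [sq_nonneg ((p+1)*(v+1) - (u+1)*(q+1))]

set_option maxHeartbeats 1000000 in
private lemma oilb_step_bound (a b d k : ℕ) (hk : k = a + b) (ha : 1 ≤ a) (hb : 1 ≤ b)
    (hd : 1 ≤ d) (hdk : d < k) (M : ℝ) (hM : 2 ≤ M)
    (H1 : (b:ℝ) - d + 1 ≤ M * a * d)
    (H2 : (a:ℝ) - d + 1 ≤ M * b * d)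
    (H3 : (d:ℝ) - a + 1 ≤ M * (a * ((k:ℝ) - d)))
    (H4 : (d:ℝ) - b + 1 ≤ M * (b * ((k:ℝ) - d)))
    (i : ℕ) (hi : i ≤ d) :
    (a.choose i : ℝ) * (b.choose (d-i) : ℝ) ≤
      M * ((if i = 0 then 0 else (a.choose (i-1) : ℝ) * (b.choose (d-(i-1)) : ℝ))
         + (if i = d then 0 else (a.choose (i+1) : ℝ) * (b.choose (d-(i+1)) : ℝ))) := by
  have hM0 : (0:ℝ) ≤ M := by linarith
  have hcn : ∀ m n : ℕ, (0:ℝ) ≤ (m.choose n : ℝ) := fun m n => Nat.cast_nonneg _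
  by_cases hi0 : i = 0
  · subst hi0
    rw [if_pos rfl, if_neg (by omega)]
    norm_num
    by_cases hbd : b < d
    · rw [Nat.choose_eq_zero_of_lt hbd]
      have : (0:ℝ) ≤ M * ((a:ℝ) * (b.choose (d-1) : ℝ)) := by positivity
      simpa using this
    · push_neg at hbd
      have e := Nat.choose_succ_right_eq b (d-1)
      rw [show d - 1 + 1 = d by omega] at e
      have key := congrArg (Nat.cast (R := ℝ)) e
      push_cast [Nat.cast_sub (show d - 1 ≤ b by omega), Nat.cast_sub hd] at key
      have hH := mul_le_mul_of_nonneg_left H1 (hcn b (d-1))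
      have hdpos : (0:ℝ) < (d:ℝ) := by exact_mod_cast hd
      nlinarith [hcn b d]
  · by_cases hid : i = d
    · rw [if_neg hi0, if_pos hid, hid]
      norm_num
      rw [show d - (d-1) = 1 by omega]
      norm_num
      by_cases had : a < d
      · rw [Nat.choose_eq_zero_of_lt had]
        have : (0:ℝ) ≤ M * ((a.choose (d-1) : ℝ) * (b:ℝ)) := by positivity
        simpa using this
      · push_neg at had
        have e := Nat.choose_succ_right_eq a (d-1)
        rw [show d - 1 + 1 = d by omega] at e
        have key := congrArg (Nat.cast (R := ℝ)) e
        push_cast [Nat.cast_sub (show d - 1 ≤ a by omega), Nat.cast_sub hd] at key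
        have hH := mul_le_mul_of_nonneg_left H2 (hcn a (d-1))
        have hdpos : (0:ℝ) < (d:ℝ) := by exact_mod_cast hd
        nlinarith [hcn a d]
    · rw [if_neg hi0, if_neg hid]
      set j := d - i with hjdef
      have hj1 : 1 ≤ j := by omega
      have hij : i + j = d := by omega
      rw [show d - (i-1) = j + 1 by omega, show d - (i+1) = j - 1 by omega]
      by_cases hai : a < i
      · rw [Nat.choose_eq_zero_of_lt hai]
        have : (0:ℝ) ≤ M * ((a.choose (i-1) : ℝ) * (b.choose (j+1) : ℝ)
            + (a.choose (i+1) : ℝ) * (b.choose (j-1) : ℝ)) := by positivity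
        simpa using this
      by_cases hbj : b < j
      · rw [Nat.choose_eq_zero_of_lt hbj]
        have : (0:ℝ) ≤ M * ((a.choose (i-1) : ℝ) * (b.choose (j+1) : ℝ)
            + (a.choose (i+1) : ℝ) * (b.choose (j-1) : ℝ)) := by positivity
        simpa using this
      push_neg at hai hbj
      have hipos : (0:ℝ) < (i:ℝ) := by exact_mod_cast Nat.pos_of_ne_zero hi0
      have hjr : (j:ℝ) = (d:ℝ) - i := by rw [hjdef]; push_cast [Nat.cast_sub hi]; ring
      by_cases hia : i = a
      · subst hia
        simp only [Nat.choose_self, Nat.cast_one, one_mul]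
        have haa : i.choose (i-1) = i := by
          have := Nat.choose_symm (show 1 ≤ i by omega)
          simpa [Nat.choose_one_right] using this
        rw [haa]
        have e := Nat.choose_succ_right_eq b j
        have key := congrArg (Nat.cast (R := ℝ)) e
        push_cast [Nat.cast_sub hbj] at key
        have hbjr : (b:ℝ) - j = (k:ℝ) - d := by rw [hjr, hk]; push_cast; ring
        rw [hbjr] at key
        have hjpos : (0:ℝ) < (j:ℝ) + 1 := by positivity
        have step1 : (b.choose j : ℝ) * ((j:ℝ)+1)
            ≤ (M * ((i:ℝ) * (b.choose (j+1) : ℝ))) * ((j:ℝ)+1) := by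
          have hH := mul_le_mul_of_nonneg_left H3 (hcn b j)
          calc (b.choose j : ℝ) * ((j:ℝ)+1) = (b.choose j : ℝ) * ((d:ℝ) - i + 1) := by rw [hjr]
            _ ≤ (b.choose j : ℝ) * (M * ((i:ℝ) * ((k:ℝ) - d))) := hH
            _ = (M * (i:ℝ)) * ((b.choose j : ℝ) * ((k:ℝ) - d)) := by ring
            _ = (M * (i:ℝ)) * ((b.choose (j+1) : ℝ) * ((j:ℝ)+1)) := by rw [← key]
            _ = _ := by ring
        have step2 : (b.choose j : ℝ) ≤ M * ((i:ℝ) * (b.choose (j+1) : ℝ)) :=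
          le_of_mul_le_mul_right step1 hjpos
        have hnext : (0:ℝ) ≤ (i.choose (i+1) : ℝ) * (b.choose (j-1) : ℝ) := by positivity
        nlinarith [mul_nonneg hM0 hnext]
      by_cases hjb : j = b
      · rw [hjb]
        simp only [Nat.choose_self, Nat.cast_one, mul_one, Nat.choose_succ_self, Nat.cast_zero,
          mul_zero, zero_add]
        have hbb : b.choose (b-1) = b := by
          have := Nat.choose_symm (show 1 ≤ b by omega)
          simpa [Nat.choose_one_right] using this
        rw [hbb]
        have e := Nat.choose_succ_right_eq a i
        have key := congrArg (Nat.cast (R := ℝ)) e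
        push_cast [Nat.cast_sub hai] at key
        have hir : (i:ℝ) = (d:ℝ) - b := by
          have : (j:ℝ) = (b:ℝ) := by exact_mod_cast congrArg (Nat.cast (R := ℝ)) hjb
          linarith [hjr]
        have hair : (a:ℝ) - i = (k:ℝ) - d := by rw [hir, hk]; push_cast; ring
        rw [hair] at key
        have hipos1 : (0:ℝ) < (i:ℝ) + 1 := by positivity
        have step1 : (a.choose i : ℝ) * ((i:ℝ)+1)
            ≤ (M * ((a.choose (i+1) : ℝ) * (b:ℝ))) * ((i:ℝ)+1) := by
          have hH := mul_le_mul_of_nonneg_left H4 (hcn a i)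
          calc (a.choose i : ℝ) * ((i:ℝ)+1) = (a.choose i : ℝ) * ((d:ℝ) - b + 1) := by rw [hir]
            _ ≤ (a.choose i : ℝ) * (M * ((b:ℝ) * ((k:ℝ) - d))) := hH
            _ = (M * (b:ℝ)) * ((a.choose i : ℝ) * ((k:ℝ) - d)) := by ring
            _ = (M * (b:ℝ)) * ((a.choose (i+1) : ℝ) * ((i:ℝ)+1)) := by rw [← key]
            _ = _ := by ring
        exact le_of_mul_le_mul_right step1 hipos1
      · have hia' : i + 1 ≤ a := by omega
        have hjb' : j + 1 ≤ b := by omega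
        set T := (a.choose i : ℝ) * (b.choose j : ℝ) with hT
        have hTnn : 0 ≤ T := by positivity
        have e1 := Nat.choose_succ_right_eq a (i-1)
        rw [show i - 1 + 1 = i by omega] at e1
        have ce1 := congrArg (Nat.cast (R := ℝ)) e1
        push_cast [Nat.cast_sub (show i - 1 ≤ a by omega),
          Nat.cast_sub (show 1 ≤ i by omega)] at ce1
        have e2 := Nat.choose_succ_right_eq b j
        have ce2 := congrArg (Nat.cast (R := ℝ)) e2
        push_cast [Nat.cast_sub hbj] at ce2
        have e3 := Nat.choose_succ_right_eq a i
        have ce3 := congrArg (Nat.cast (R := ℝ)) e3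
        push_cast [Nat.cast_sub hai] at ce3
        have e4 := Nat.choose_succ_right_eq b (j-1)
        rw [show j - 1 + 1 = j by omega] at e4
        have ce4 := congrArg (Nat.cast (R := ℝ)) e4
        push_cast [Nat.cast_sub (show j - 1 ≤ b by omega),
          Nat.cast_sub (show 1 ≤ j by omega)] at ce4
        set x := ((a:ℝ) - i + 1) * ((j:ℝ) + 1) with hxdef
        set y := ((i:ℝ) + 1) * ((b:ℝ) - j + 1) with hydef
        have hIa : (i:ℝ) + 1 ≤ (a:ℝ) := by exact_mod_cast hia'
        have hJb : (j:ℝ) + 1 ≤ (b:ℝ) := by exact_mod_cast hjb'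
        have hx : (0:ℝ) < x := by
          rw [hxdef]
          have : (0:ℝ) < (a:ℝ) - i + 1 := by linarith
          positivity
        have hy : (0:ℝ) < y := by
          rw [hydef]
          have : (0:ℝ) < (b:ℝ) - j + 1 := by linarith
          positivity
        have hPrev : (a.choose (i-1) : ℝ) * (b.choose (j+1) : ℝ) * x
            = T * ((i:ℝ) * ((b:ℝ) - j)) := by
          calc (a.choose (i-1) : ℝ) * (b.choose (j+1) : ℝ) * x
              = ((a.choose (i-1) : ℝ) * ((a:ℝ) - ((i:ℝ) - 1)))
                * ((b.choose (j+1) : ℝ) * ((j:ℝ)+1)) := by rw [hxdef]; ring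
            _ = ((a.choose i : ℝ) * (i:ℝ)) * ((b.choose j : ℝ) * ((b:ℝ) - j)) := by
                rw [← ce1, ce2]
            _ = T * ((i:ℝ) * ((b:ℝ) - j)) := by rw [hT]; ring
        have hNext : (a.choose (i+1) : ℝ) * (b.choose (j-1) : ℝ) * y
            = T * (((a:ℝ) - i) * (j:ℝ)) := by
          calc (a.choose (i+1) : ℝ) * (b.choose (j-1) : ℝ) * y
              = ((a.choose (i+1) : ℝ) * ((i:ℝ)+1))
                * ((b.choose (j-1) : ℝ) * ((b:ℝ) - ((j:ℝ) - 1))) := by rw [hydef]; ring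
            _ = ((a.choose i : ℝ) * ((a:ℝ) - i)) * ((b.choose j : ℝ) * (j:ℝ)) := by
                rw [ce3, ← ce4]
            _ = T * (((a:ℝ) - i) * (j:ℝ)) := by rw [hT]; ring
        have hPrevEq : (a.choose (i-1) : ℝ) * (b.choose (j+1) : ℝ)
            = T * ((i:ℝ) * ((b:ℝ) - j)) / x := (eq_div_iff hx.ne').mpr hPrev
        have hNextEq : (a.choose (i+1) : ℝ) * (b.choose (j-1) : ℝ)
            = T * (((a:ℝ) - i) * (j:ℝ)) / y := (eq_div_iff hy.ne').mpr hNext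
        have hkey := oilb_key_ineq (i:ℝ) (j:ℝ) ((a:ℝ) - i) ((b:ℝ) - j)
          (by exact_mod_cast Nat.pos_of_ne_zero hi0) (by exact_mod_cast hj1)
          (by linarith) (by linarith)
        have hsum : T * (1/2) ≤ (a.choose (i-1) : ℝ) * (b.choose (j+1) : ℝ)
            + (a.choose (i+1) : ℝ) * (b.choose (j-1) : ℝ) := by
          rw [hPrevEq, hNextEq]
          calc T * (1/2) ≤ T * ((i:ℝ) * ((b:ℝ) - j) / (((a:ℝ) - i + 1) * ((j:ℝ) + 1))
                + ((a:ℝ) - i) * (j:ℝ) / (((i:ℝ) + 1) * ((b:ℝ) - j + 1))) :=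
              mul_le_mul_of_nonneg_left hkey hTnn
            _ = T * ((i:ℝ) * ((b:ℝ) - j)) / x + T * (((a:ℝ) - i) * (j:ℝ)) / y := by
              rw [hxdef, hydef]; ring
        have hPN : (0:ℝ) ≤ (a.choose (i-1) : ℝ) * (b.choose (j+1) : ℝ)
            + (a.choose (i+1) : ℝ) * (b.choose (j-1) : ℝ) := by positivity
        calc (a.choose i : ℝ) * (b.choose j : ℝ) = 2 * (T * (1/2)) := by rw [hT]; ring
          _ ≤ 2 * ((a.choose (i-1) : ℝ) * (b.choose (j+1) : ℝ)
              + (a.choose (i+1) : ℝ) * (b.choose (j-1) : ℝ)) := by linarith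
          _ ≤ M * ((a.choose (i-1) : ℝ) * (b.choose (j+1) : ℝ)
              + (a.choose (i+1) : ℝ) * (b.choose (j-1) : ℝ)) := mul_le_mul_of_nonneg_right hM hPN

private lemma oilb_sum_pair_bound (a b d : ℕ) (hd : 1 ≤ d) (M : ℝ) (hM : 0 ≤ M)
    (h : ∀ i, i ≤ d → (a.choose i : ℝ) * (b.choose (d-i) : ℝ) ≤
      M * ((if i = 0 then 0 else (a.choose (i-1) : ℝ) * (b.choose (d-(i-1)) : ℝ))
         + (if i = d then 0 else (a.choose (i+1) : ℝ) * (b.choose (d-(i+1)) : ℝ)))) :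
    ((a+b).choose d : ℝ) ≤ (1 + 2*M) * ∑ i ∈ (range (d+1)).filter (fun i => Odd i),
        (a.choose i : ℝ) * (b.choose (d-i) : ℝ) := by
  set f : ℕ → ℝ := fun i => (a.choose i : ℝ) * (b.choose (d-i) : ℝ) with hf
  have hfnn : ∀ i, 0 ≤ f i := fun i => by positivity
  have total : ∑ i ∈ range (d+1), f i = ((a+b).choose d : ℝ) := by
    rw [hf]
    push_cast [← Nat.cast_sum]
    norm_cast
    rw [Nat.add_choose_eq, Finset.Nat.sum_antidiagonal_eq_sum_range_succ_mk]
  have hsplit := Finset.sum_filter_add_sum_filter_not (range (d+1)) (fun i => Odd i) f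
  set Sodd := ∑ i ∈ (range (d+1)).filter (fun i => Odd i), f i with hSodd
  set Seven := ∑ i ∈ (range (d+1)).filter (fun i => ¬ Odd i), f i with hSeven
  -- prev sums
  have hprev : ∑ i ∈ (range (d+1)).filter (fun i => ¬ Odd i),
      (if i = 0 then 0 else f (i-1)) ≤ Sodd := by
    have e1 : ∑ i ∈ (range (d+1)).filter (fun i => ¬ Odd i), (if i = 0 then 0 else f (i-1))
        = ∑ i ∈ ((range (d+1)).filter (fun i => ¬ Odd i)).filter (fun i => ¬ i = 0), f (i-1) := by
      rw [eq_comm, Finset.sum_filter]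
      exact Finset.sum_congr rfl (fun i _ => by by_cases h0 : i = 0 <;> simp [h0])
    rw [e1]
    rw [← Finset.sum_image (g := fun i => i - 1)
      (by intro x hx y hy hxy
          simp only [coe_filter, mem_coe, mem_filter, mem_range, Set.mem_setOf_eq] at hx hy
          simp only at hxy
          omega)]
    apply Finset.sum_le_sum_of_subset_of_nonneg
    · intro j hj
      simp only [mem_image, mem_filter, mem_range] at hj ⊢
      obtain ⟨i, ⟨⟨hir, hie⟩, hi0⟩, rfl⟩ := hj
      rw [Nat.odd_iff] at hie ⊢
      omega
    · intro j _ _; exact hfnn j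
  have hnext : ∑ i ∈ (range (d+1)).filter (fun i => ¬ Odd i),
      (if i = d then 0 else f (i+1)) ≤ Sodd := by
    have e1 : ∑ i ∈ (range (d+1)).filter (fun i => ¬ Odd i), (if i = d then 0 else f (i+1))
        = ∑ i ∈ ((range (d+1)).filter (fun i => ¬ Odd i)).filter (fun i => ¬ i = d), f (i+1) := by
      rw [eq_comm, Finset.sum_filter]
      exact Finset.sum_congr rfl (fun i _ => by by_cases h0 : i = d <;> simp [h0])
    rw [e1]
    rw [← Finset.sum_image (g := fun i => i + 1)
      (by intro x hx y hy hxy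
          simp only at hxy
          omega)]
    apply Finset.sum_le_sum_of_subset_of_nonneg
    · intro j hj
      simp only [mem_image, mem_filter, mem_range] at hj ⊢
      obtain ⟨i, ⟨⟨hir, hie⟩, hi0⟩, rfl⟩ := hj
      rw [Nat.odd_iff] at hie ⊢
      omega
    · intro j _ _; exact hfnn j
  have heven : Seven ≤ 2 * M * Sodd := by
    have step : Seven ≤ ∑ i ∈ (range (d+1)).filter (fun i => ¬ Odd i),
        M * ((if i = 0 then 0 else f (i-1)) + (if i = d then 0 else f (i+1))) := by
      apply Finset.sum_le_sum
      intro i hi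
      simp only [mem_filter, mem_range] at hi
      exact h i (by omega)
    rw [← Finset.mul_sum, Finset.sum_add_distrib] at step
    calc Seven ≤ M * (∑ i ∈ (range (d+1)).filter (fun i => ¬ Odd i), (if i = 0 then 0 else f (i-1))
          + ∑ i ∈ (range (d+1)).filter (fun i => ¬ Odd i), (if i = d then 0 else f (i+1))) := step
      _ ≤ M * (Sodd + Sodd) := by
          apply mul_le_mul_of_nonneg_left _ hM
          linarith
      _ = 2 * M * Sodd := by ring
  have hSoddnn : 0 ≤ Sodd := Finset.sum_nonneg (fun i _ => hfnn i)
  calc ((a+b).choose d : ℝ) = Sodd + Seven := by rw [← total, ← hsplit]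
    _ ≤ Sodd + 2 * M * Sodd := by linarith
    _ = (1 + 2*M) * Sodd := by ring

-- aux1 : main small-side bound
private lemma oilb_aux1 (D E A α : ℝ) (hD : 1 ≤ D) (hE : 1 ≤ E) (hA : 1 ≤ A)
    (hαD : E + 1 ≤ α * D) (hαE : D + 1 ≤ α * E)
    (hsm : A * (2*D+1) < E + 1 ∨ A * (2*E+1) < D + 1) :
    E - A + 1 ≤ (5*α/4 - A/2) * D := by
  rcases hsm with hc | hc
  · nlinarith [hαD, hc]
  · have hD0 : (0:ℝ) < D := by linarith
    have hE0 : (0:ℝ) < E := by linarith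
    have k3 : 2*E < D := by nlinarith [hc]
    have key : 4*(E*(2*E+1))*(E - A + 1) + 2*(A*D)*(E*(2*E+1)) ≤ 5*(α*D)*(E*(2*E+1)) := by
      have k1 : 5*D*(2*E+1)*(D+1) ≤ 5*D*(2*E+1)*(α*E) :=
        mul_le_mul_of_nonneg_left hαE (by positivity)
      have k2 : 2*(D*E)*(A*(2*E+1)) ≤ 2*(D*E)*(D+1) :=
        mul_le_mul_of_nonneg_left hc.le (by positivity)
      have s3 : 4*(E*(2*E+1))*(E - A + 1) ≤ 4*(E*(2*E+1))*E := by
        nlinarith [mul_nonneg (by linarith : (0:ℝ) ≤ A - 1) (by positivity : (0:ℝ) ≤ E*(2*E+1))]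
      have hP : 2*E*(2*E+1) < D*(D+1) :=
        mul_lt_mul'' k3 (by linarith : 2*E+1 < D+1) (by positivity) (by positivity)
      have s4 : 4*(E*(2*E+1))*E + 2*(D*E)*(D+1) ≤ 5*D*(2*E+1)*(D+1) := by
        nlinarith [hP, mul_lt_mul_of_pos_right hP hE0,
          mul_pos (mul_pos hE0 hE0) hE0, mul_pos hE0 hE0, hE0]
      nlinarith [k1, k2, s3, s4]
    nlinarith [key, mul_pos hE0 (by positivity : (0:ℝ) < 2*E+1)]

-- aux2 : other side bound
private lemma oilb_aux2 (D E A B : ℝ) (hD : 1 ≤ D) (hE : 1 ≤ E) (hA : 1 ≤ A) (hB : 1 ≤ B)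
    (hAB : A + B = D + E)
    (hsm : A * (2*D+1) < E + 1 ∨ A * (2*E+1) < D + 1) :
    E + 1 ≤ B * (2*D+1) := by
  rcases hsm with hc | hc
  · nlinarith [hc, mul_nonneg (by linarith : (0:ℝ) ≤ B - 1) (by linarith : (0:ℝ) ≤ 2*D+1)]
  · have k3 : 2*E < D := by nlinarith [hc]
    nlinarith [mul_nonneg (by linarith : (0:ℝ) ≤ B - 1) (by linarith : (0:ℝ) ≤ 2*D+1)]

-- M ≥ 2 in small case
private lemma oilb_auxM (D E A α M : ℝ) (hD : 1 ≤ D) (hE : 1 ≤ E) (hA : 1 ≤ A)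
    (hαD : E + 1 ≤ α * D) (hαE : D + 1 ≤ α * E)
    (hsm : A * (2*D+1) < E + 1 ∨ A * (2*E+1) < D + 1)
    (hMA : M * A = 5*α/4 - A/2) : 2 ≤ M := by
  have hA0 : (0:ℝ) < A := by linarith
  have hα2A : 2*A ≤ α := by
    rcases hsm with hc | hc
    · by_contra h
      push_neg at h
      nlinarith [mul_lt_mul_of_pos_right h (by linarith : (0:ℝ) < D)]
    · by_contra h
      push_neg at h
      nlinarith [mul_lt_mul_of_pos_right h (by linarith : (0:ℝ) < E)]
  have : 0 ≤ (M - 2) * A := by nlinarith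
  nlinarith

-- middle case hypotheses
private lemma oilb_auxMid (D E X : ℝ) (hD : 1 ≤ D) (hE : 1 ≤ E)
    (h1 : E + 1 ≤ X * (2*D+1)) (h2 : D + 1 ≤ X * (2*E+1)) :
    (D + E) - X - D + 1 ≤ 2 * X * D ∧ D - X + 1 ≤ 2 * (X * E) := by
  constructor
  · nlinarith [h1]
  · nlinarith [h2]

set_option maxHeartbeats 1600000 in
/-- Lower bound on the odd-intersection mass (Ahn et al.): with
    `β = ⌈max{(k-d+1)/(2d+1), (d+1)/(2(k-d)+1)}⌉` and `α = max{(k-d+1)/d, (d+1)/(k-d)}`,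
    `Σ_{i odd} C(s,i)C(k-s,d-i)` is at least `(2s/(5α))C(k,d)` when `s < β`, at least
    `(1/5)C(k,d)` when `β ≤ s ≤ k-β`, and at least `(2(k-s)/(5α))C(k,d)` when `s > k-β`. -/
theorem odd_intersection_lower_bound (k d s : ℕ) (hd : 1 ≤ d) (hdk : d < k)
    (hs : 1 ≤ s) (hsk : s < k) :
    ∀ (α : ℝ), α = max (((k : ℝ) - d + 1) / d) (((d : ℝ) + 1) / ((k : ℝ) - d)) →
    ∀ (β : ℕ), β = ⌈max ((((k : ℝ) - d + 1)) / (2 * (d : ℝ) + 1))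
        (((d : ℝ) + 1) / (2 * ((k : ℝ) - d) + 1))⌉₊ →
    ((s < β →
        (∑ i ∈ (Finset.range (d + 1)).filter (fun i => Odd i),
          (s.choose i * (k - s).choose (d - i) : ℝ))
          ≥ (2 * s / (5 * α)) * (k.choose d : ℝ)) ∧
     (β ≤ s → s ≤ k - β →
        (∑ i ∈ (Finset.range (d + 1)).filter (fun i => Odd i),
          (s.choose i * (k - s).choose (d - i) : ℝ))
          ≥ (1 / 5) * (k.choose d : ℝ)) ∧
     (k - β < s →
        (∑ i ∈ (Finset.range (d + 1)).filter (fun i => Odd i),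
          (s.choose i * (k - s).choose (d - i) : ℝ))
          ≥ (2 * ((k : ℝ) - s) / (5 * α)) * (k.choose d : ℝ))) := by
  intro α hα β hβ
  have hk2 : k = s + (k - s) := by omega
  have hb1 : 1 ≤ k - s := by omega
  have hbcast : ((k - s : ℕ) : ℝ) = (k:ℝ) - s := by
    push_cast [Nat.cast_sub hsk.le]; ring
  have hD1 : (1:ℝ) ≤ (d:ℝ) := by exact_mod_cast hd
  have hE1 : (1:ℝ) ≤ (k:ℝ) - d := by
    have : (d:ℝ) + 1 ≤ (k:ℝ) := by exact_mod_cast hdk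
    linarith
  have hA1 : (1:ℝ) ≤ (s:ℝ) := by exact_mod_cast hs
  have hB1 : (1:ℝ) ≤ (k:ℝ) - s := by
    have : (s:ℝ) + 1 ≤ (k:ℝ) := by exact_mod_cast hsk
    linarith
  have hD0 : (0:ℝ) < (d:ℝ) := by linarith
  have hE0 : (0:ℝ) < (k:ℝ) - d := by linarith
  have hαD : (k:ℝ) - d + 1 ≤ α * d := by
    rw [hα]
    exact (div_le_iff₀ hD0).mp (le_max_left _ _)
  have hαE : (d:ℝ) + 1 ≤ α * ((k:ℝ) - d) := by
    rw [hα]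
    exact (div_le_iff₀ hE0).mp (le_max_right _ _)
  have hα0 : (0:ℝ) < α := by
    have h := le_max_left (((k : ℝ) - d + 1) / d) (((d : ℝ) + 1) / ((k : ℝ) - d))
    rw [← hα] at h
    have : (0:ℝ) < ((k : ℝ) - d + 1) / d := by positivity
    linarith
  -- main machinery : given M and the four hypotheses, get the sum bound
  have main : ∀ M : ℝ, 2 ≤ M →
      ((k:ℝ) - s) - d + 1 ≤ M * s * d →
      (s:ℝ) - d + 1 ≤ M * ((k:ℝ) - s) * d →
      (d:ℝ) - s + 1 ≤ M * (s * ((k:ℝ) - d)) →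
      (d:ℝ) - ((k:ℝ) - s) + 1 ≤ M * (((k:ℝ) - s) * ((k:ℝ) - d)) →
      (k.choose d : ℝ) ≤ (1 + 2*M) * ∑ i ∈ (Finset.range (d + 1)).filter (fun i => Odd i),
          (s.choose i * (k - s).choose (d - i) : ℝ) := by
    intro M hM H1 H2 H3 H4
    have step := oilb_step_bound s (k-s) d k hk2 hs hb1 hd hdk M hM
      (by rw [hbcast]; exact H1) (by rw [hbcast]; exact H2)
      (by exact H3) (by rw [hbcast]; exact H4)
    have sumb := oilb_sum_pair_bound s (k-s) d hd M (by linarith) step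
    rw [show s + (k - s) = k by omega] at sumb
    exact sumb
  refine ⟨?_, ⟨?_, ?_⟩⟩
  · -- case s < β
    intro hsβ
    have hsm' : (s:ℝ) < max ((((k : ℝ) - d + 1)) / (2 * (d : ℝ) + 1))
        (((d : ℝ) + 1) / (2 * ((k : ℝ) - d) + 1)) := Nat.lt_ceil.mp (hβ ▸ hsβ)
    have hsm : (s:ℝ) * (2*(d:ℝ)+1) < ((k:ℝ)-d) + 1 ∨ (s:ℝ) * (2*((k:ℝ)-d)+1) < (d:ℝ) + 1 := by
      rcases lt_max_iff.mp hsm' with h | h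
      · left; have := (lt_div_iff₀ (by linarith : (0:ℝ) < 2*(d:ℝ)+1)).mp h; linarith
      · right; have := (lt_div_iff₀ (by linarith : (0:ℝ) < 2*((k:ℝ)-d)+1)).mp h; linarith
    obtain ⟨M, hMdef⟩ : ∃ M : ℝ, M = 5*α/(4*(s:ℝ)) - 1/2 := ⟨_, rfl⟩
    have hs0 : (0:ℝ) < (s:ℝ) := by linarith
    have hMA : M * (s:ℝ) = 5*α/4 - (s:ℝ)/2 := by
      rw [hMdef]; field_simp
    have hM2 : 2 ≤ M := oilb_auxM (d:ℝ) ((k:ℝ)-d) (s:ℝ) α M hD1 hE1 hA1 hαD hαE hsm hMA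
    have h1 := oilb_aux1 (d:ℝ) ((k:ℝ)-d) (s:ℝ) α hD1 hE1 hA1 hαD hαE hsm
    have h3 := oilb_aux1 ((k:ℝ)-d) (d:ℝ) (s:ℝ) α hE1 hD1 hA1 hαE hαD hsm.symm
    have h2 := oilb_aux2 (d:ℝ) ((k:ℝ)-d) (s:ℝ) ((k:ℝ)-s) hD1 hE1 hA1 hB1 (by ring) hsm
    have h4 := oilb_aux2 ((k:ℝ)-d) (d:ℝ) (s:ℝ) ((k:ℝ)-s) hE1 hD1 hA1 hB1 (by ring) hsm.symm
    have hrw1 : M * (s:ℝ) * (d:ℝ) = (5*α/4 - (s:ℝ)/2) * (d:ℝ) := by rw [← hMA]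
    have hrw3 : M * ((s:ℝ) * ((k:ℝ)-d)) = (5*α/4 - (s:ℝ)/2) * ((k:ℝ)-d) := by
      rw [← hMA]; ring
    have hBD : 2*(((k:ℝ)-s) * (d:ℝ)) ≤ M * ((k:ℝ)-s) * (d:ℝ) := by
      nlinarith [mul_nonneg (mul_nonneg (by linarith : (0:ℝ) ≤ M - 2)
        (by linarith : (0:ℝ) ≤ (k:ℝ)-s)) (by linarith : (0:ℝ) ≤ (d:ℝ))]
    have hBE : 2*(((k:ℝ)-s) * ((k:ℝ)-d)) ≤ M * (((k:ℝ)-s) * ((k:ℝ)-d)) := by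
      nlinarith [mul_nonneg (mul_nonneg (by linarith : (0:ℝ) ≤ M - 2)
        (by linarith : (0:ℝ) ≤ (k:ℝ)-s)) (by linarith : (0:ℝ) ≤ (k:ℝ)-d)]
    have hsum := main M hM2 (by nlinarith [h1, hrw1]) (by nlinarith [h2, hBD])
      (by nlinarith [h3, hrw3]) (by nlinarith [h4, hBE])
    have h1p2M : 1 + 2*M = 5*α/(2*(s:ℝ)) := by
      rw [hMdef]; field_simp; ring
    have final : (2 * (s:ℝ) / (5 * α)) * (k.choose d : ℝ)
        ≤ ∑ i ∈ (Finset.range (d + 1)).filter (fun i => Odd i),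
          (s.choose i * (k - s).choose (d - i) : ℝ) := by
      calc (2 * (s:ℝ) / (5 * α)) * (k.choose d : ℝ)
          ≤ (2 * (s:ℝ) / (5 * α)) * ((1 + 2*M) * ∑ i ∈ (Finset.range (d + 1)).filter
              (fun i => Odd i), (s.choose i * (k - s).choose (d - i) : ℝ)) :=
            mul_le_mul_of_nonneg_left hsum (by positivity)
        _ = _ := by rw [h1p2M]; field_simp
    exact final
  · -- middle case
    intro hβs hsβ
    have hβk : β ≤ k - s := by omega
    have hα'β : max ((((k : ℝ) - d + 1)) / (2 * (d : ℝ) + 1))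
        (((d : ℝ) + 1) / (2 * ((k : ℝ) - d) + 1)) ≤ (β:ℝ) := hβ ▸ Nat.le_ceil _
    have hβA : (β:ℝ) ≤ (s:ℝ) := by exact_mod_cast hβs
    have hβB : (β:ℝ) ≤ (k:ℝ) - s := by
      have : (β:ℝ) ≤ ((k - s : ℕ):ℝ) := by exact_mod_cast hβk
      rw [hbcast] at this; exact this
    have hA2D : ((k:ℝ)-d) + 1 ≤ (s:ℝ) * (2*(d:ℝ)+1) := by
      have h := le_trans (le_max_left _ _) hα'β
      have := (div_le_iff₀ (by linarith : (0:ℝ) < 2*(d:ℝ)+1)).mp (le_trans h hβA)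
      linarith
    have hA2E : (d:ℝ) + 1 ≤ (s:ℝ) * (2*((k:ℝ)-d)+1) := by
      have h := le_trans (le_max_right _ _) hα'β
      have := (div_le_iff₀ (by linarith : (0:ℝ) < 2*((k:ℝ)-d)+1)).mp (le_trans h hβA)
      linarith
    have hB2D : ((k:ℝ)-d) + 1 ≤ ((k:ℝ)-s) * (2*(d:ℝ)+1) := by
      have h := le_trans (le_max_left _ _) hα'β
      have := (div_le_iff₀ (by linarith : (0:ℝ) < 2*(d:ℝ)+1)).mp (le_trans h hβB)
      linarith
    have hB2E : (d:ℝ) + 1 ≤ ((k:ℝ)-s) * (2*((k:ℝ)-d)+1) := by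
      have h := le_trans (le_max_right _ _) hα'β
      have := (div_le_iff₀ (by linarith : (0:ℝ) < 2*((k:ℝ)-d)+1)).mp (le_trans h hβB)
      linarith
    have hsum := main 2 (le_refl 2) (by nlinarith [hA2D]) (by nlinarith [hB2D])
      (by nlinarith [hA2E]) (by nlinarith [hB2E])
    have hnn : (0:ℝ) ≤ ∑ i ∈ (Finset.range (d + 1)).filter (fun i => Odd i),
        (s.choose i * (k - s).choose (d - i) : ℝ) :=
      Finset.sum_nonneg (fun i _ => by positivity)
    norm_num at hsum ⊢
    linarith
  · -- case k - β < s
    intro hsβ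
    have hbβ : k - s < β := by omega
    have hsm' : (((k - s : ℕ)):ℝ) < max ((((k : ℝ) - d + 1)) / (2 * (d : ℝ) + 1))
        (((d : ℝ) + 1) / (2 * ((k : ℝ) - d) + 1)) := Nat.lt_ceil.mp (hβ ▸ hbβ)
    rw [hbcast] at hsm'
    have hsm : ((k:ℝ)-s) * (2*(d:ℝ)+1) < ((k:ℝ)-d) + 1
        ∨ ((k:ℝ)-s) * (2*((k:ℝ)-d)+1) < (d:ℝ) + 1 := by
      rcases lt_max_iff.mp hsm' with h | h
      · left; have := (lt_div_iff₀ (by linarith : (0:ℝ) < 2*(d:ℝ)+1)).mp h; linarith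
      · right; have := (lt_div_iff₀ (by linarith : (0:ℝ) < 2*((k:ℝ)-d)+1)).mp h; linarith
    obtain ⟨M, hMdef⟩ : ∃ M : ℝ, M = 5*α/(4*((k:ℝ)-s)) - 1/2 := ⟨_, rfl⟩
    have hb0 : (0:ℝ) < (k:ℝ) - s := by linarith
    have hMB : M * ((k:ℝ)-s) = 5*α/4 - ((k:ℝ)-s)/2 := by
      rw [hMdef]; field_simp
    have hM2 : 2 ≤ M := oilb_auxM (d:ℝ) ((k:ℝ)-d) ((k:ℝ)-s) α M hD1 hE1 hB1 hαD hαE hsm hMB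
    have h2 := oilb_aux1 (d:ℝ) ((k:ℝ)-d) ((k:ℝ)-s) α hD1 hE1 hB1 hαD hαE hsm
    have h4 := oilb_aux1 ((k:ℝ)-d) (d:ℝ) ((k:ℝ)-s) α hE1 hD1 hB1 hαE hαD hsm.symm
    have h1 := oilb_aux2 (d:ℝ) ((k:ℝ)-d) ((k:ℝ)-s) (s:ℝ) hD1 hE1 hB1 hA1 (by ring) hsm
    have h3 := oilb_aux2 ((k:ℝ)-d) (d:ℝ) ((k:ℝ)-s) (s:ℝ) hE1 hD1 hB1 hA1 (by ring) hsm.symm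
    have hrw2 : M * ((k:ℝ)-s) * (d:ℝ) = (5*α/4 - ((k:ℝ)-s)/2) * (d:ℝ) := by rw [← hMB]
    have hrw4 : M * (((k:ℝ)-s) * ((k:ℝ)-d)) = (5*α/4 - ((k:ℝ)-s)/2) * ((k:ℝ)-d) := by
      rw [← hMB]; ring
    have hAD : 2*((s:ℝ) * (d:ℝ)) ≤ M * (s:ℝ) * (d:ℝ) := by
      nlinarith [mul_nonneg (mul_nonneg (by linarith : (0:ℝ) ≤ M - 2)
        (by linarith : (0:ℝ) ≤ (s:ℝ))) (by linarith : (0:ℝ) ≤ (d:ℝ))]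
    have hAE : 2*((s:ℝ) * ((k:ℝ)-d)) ≤ M * ((s:ℝ) * ((k:ℝ)-d)) := by
      nlinarith [mul_nonneg (mul_nonneg (by linarith : (0:ℝ) ≤ M - 2)
        (by linarith : (0:ℝ) ≤ (s:ℝ))) (by linarith : (0:ℝ) ≤ (k:ℝ)-d)]
    have hsum := main M hM2 (by nlinarith [h1, hAD]) (by nlinarith [h2, hrw2])
      (by nlinarith [h3, hAE]) (by nlinarith [h4, hrw4])
    have h1p2M : 1 + 2*M = 5*α/(2*((k:ℝ)-s)) := by
      rw [hMdef]; field_simp; ring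
    calc (2 * ((k:ℝ)-s) / (5 * α)) * (k.choose d : ℝ)
        ≤ (2 * ((k:ℝ)-s) / (5 * α)) * ((1 + 2*M) * ∑ i ∈ (Finset.range (d + 1)).filter
            (fun i => Odd i), (s.choose i * (k - s).choose (d - i) : ℝ)) :=
          mul_le_mul_of_nonneg_left hsum (by positivity)
      _ = _ := by rw [h1p2M]; field_simp
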